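/- arXiv:2204.11516 — 2 statements merged into one kernel-verified Lean document; each statement's English description precedes it below -/
import Mathlib

section
/- Suppose 𝒜 satisfies the RIP with constant δ ∈ (0,1), let v ∈ ℝ^{n2} be a unit vector, and let u ∈ ℝ^{n1} satisfy the normal equation u = ⟨v,v_⋆⟩u_⋆ + [(Id − 𝒜*𝒜)(uvᵀ − u_⋆v_⋆ᵀ)]v. Then: (a) ‖u − ⟨v_⋆,v⟩u_⋆‖ ≤ (δ/(1−δ))·‖v^⊥‖; (b) ‖u^⊥‖ ≤ (δ/(1−δ))·‖v^⊥‖; and (c) if moreover δ ≤ 1/2, then ‖u‖ ≤ 2. -/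
open MeasureTheory ProbabilityTheory Matrix Finset
open scoped BigOperators ENNReal NNReal RealInnerProductSpace

noncomputable section

namespace ALSPaper

/-- View a plain vector as an element of Euclidean space. -/
def toE {n : ℕ} (x : Fin n → ℝ) : EuclideanSpace ℝ (Fin n) :=
  (WithLp.equiv 2 (Fin n → ℝ)).symm x

/-- View an element of Euclidean space as a plain vector. -/
def ofE {n : ℕ} (x : EuclideanSpace ℝ (Fin n)) : Fin n → ℝ :=
  WithLp.equiv 2 (Fin n → ℝ) x

/-- The first standard basis vector. -/
def e1 (n : ℕ) : EuclideanSpace ℝ (Fin n) :=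
  toE fun i => if (i : ℕ) = 0 then 1 else 0

/-- Frobenius inner product. -/
def frobInner {n1 n2 : ℕ} (A B : Matrix (Fin n1) (Fin n2) ℝ) : ℝ :=
  ∑ i, ∑ j, A i j * B i j

/-- Frobenius norm. -/
def frobNorm {n1 n2 : ℕ} (A : Matrix (Fin n1) (Fin n2) ℝ) : ℝ :=
  Real.sqrt (frobInner A A)

/-- The measurement operator. -/
def calA {n1 n2 m : ℕ} (A : Fin m → Matrix (Fin n1) (Fin n2) ℝ)
    (X : Matrix (Fin n1) (Fin n2) ℝ) : EuclideanSpace ℝ (Fin m) :=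
  toE fun i => (Real.sqrt m)⁻¹ * frobInner (A i) X

/-- The adjoint of the measurement operator. -/
def calAdj {n1 n2 m : ℕ} (A : Fin m → Matrix (Fin n1) (Fin n2) ℝ)
    (w : EuclideanSpace ℝ (Fin m)) : Matrix (Fin n1) (Fin n2) ℝ :=
  ∑ i, ((Real.sqrt m)⁻¹ * ofE w i) • A i

/-- The restricted isometry property (RIP) with constant `δ` (for rank ≤ 4). -/
def HasRIP {n1 n2 m : ℕ} (A : Fin m → Matrix (Fin n1) (Fin n2) ℝ) (δ : ℝ) : Prop :=
  ∀ Z : Matrix (Fin n1) (Fin n2) ℝ, Z.rank ≤ 4 →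
    (1 - δ) * frobNorm Z ^ 2 ≤ ‖calA A Z‖ ^ 2 ∧ ‖calA A Z‖ ^ 2 ≤ (1 + δ) * frobNorm Z ^ 2

/-- Component of `v` parallel to the first standard basis vector. -/
def par {n : ℕ} (v : EuclideanSpace ℝ (Fin n)) : EuclideanSpace ℝ (Fin n) :=
  ⟪e1 n, v⟫ • e1 n

/-- Component of `v` orthogonal to the first standard basis vector. -/
def perp {n : ℕ} (v : EuclideanSpace ℝ (Fin n)) : EuclideanSpace ℝ (Fin n) :=
  v - par v

/-- The "diagonal block" part of a measurement matrix. -/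
def Dmat {n1 n2 : ℕ} (A : Matrix (Fin n1) (Fin n2) ℝ) : Matrix (Fin n1) (Fin n2) ℝ :=
  vecMulVec (ofE (e1 n1)) (ofE (e1 n1)) * A * vecMulVec (ofE (e1 n2)) (ofE (e1 n2))
    + (1 - vecMulVec (ofE (e1 n1)) (ofE (e1 n1))) * A *
        (1 - vecMulVec (ofE (e1 n2)) (ofE (e1 n2)))

/-- The "off-diagonal block" part of a measurement matrix. -/
def Omat {n1 n2 : ℕ} (A : Matrix (Fin n1) (Fin n2) ℝ) : Matrix (Fin n1) (Fin n2) ℝ :=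
  vecMulVec (ofE (e1 n1)) (ofE (e1 n1)) * A * (1 - vecMulVec (ofE (e1 n2)) (ofE (e1 n2)))
    + (1 - vecMulVec (ofE (e1 n1)) (ofE (e1 n1))) * A * vecMulVec (ofE (e1 n2)) (ofE (e1 n2))

/-- The (1,1) entry of a matrix. -/
def ent11 {n1 n2 : ℕ} (A : Matrix (Fin n1) (Fin n2) ℝ) : ℝ :=
  frobInner (vecMulVec (ofE (e1 n1)) (ofE (e1 n2))) A

/-- Spectral (operator) norm of a matrix. -/
def specNorm {n1 n2 : ℕ} (M : Matrix (Fin n1) (Fin n2) ℝ) : ℝ :=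
  ‖LinearMap.toContinuousLinearMap (Matrix.toEuclideanLin M)‖

/-- The normal equation for the least-squares update. -/
def NormalEq {n1 n2 m : ℕ} (A : Fin m → Matrix (Fin n1) (Fin n2) ℝ)
    (u : EuclideanSpace ℝ (Fin n1)) (v : EuclideanSpace ℝ (Fin n2)) : Prop :=
  u = ⟪v, e1 n2⟫ • e1 n1 +
    toE (((vecMulVec (ofE u) (ofE v) - vecMulVec (ofE (e1 n1)) (ofE (e1 n2))) -
      calAdj A (calA A (vecMulVec (ofE u) (ofE v) - vecMulVec (ofE (e1 n1)) (ofE (e1 n2)))))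
        *ᵥ ofE v)

/-- sin of the angle between two vectors. -/
def sinAngle {n : ℕ} (a b : EuclideanSpace ℝ (Fin n)) : ℝ :=
  Real.sqrt (1 - ⟪a, b⟫ ^ 2 / (‖a‖ ^ 2 * ‖b‖ ^ 2))

/-- `c_t` sequence. -/
def cseq (n2 t : ℕ) : ℝ := (1 + 1 / Real.log n2) ^ t - 1

/-- ALS iterates. -/
def IsALS {n1 n2 m : ℕ} (A : Fin m → Matrix (Fin n1) (Fin n2) ℝ)
    (y : EuclideanSpace ℝ (Fin m)) (v0 : EuclideanSpace ℝ (Fin n2))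
    (u : ℕ → EuclideanSpace ℝ (Fin n1)) (v : ℕ → EuclideanSpace ℝ (Fin n2))
    (uh : ℕ → EuclideanSpace ℝ (Fin n1)) (vh : ℕ → EuclideanSpace ℝ (Fin n2)) : Prop :=
  v 0 = v0 ∧
  ∀ t : ℕ,
    (∀ u' : EuclideanSpace ℝ (Fin n1),
      ‖y - calA A (vecMulVec (ofE (uh t)) (ofE (v t)))‖ ≤
        ‖y - calA A (vecMulVec (ofE u') (ofE (v t)))‖) ∧
    u (t + 1) = ‖uh t‖⁻¹ • uh t ∧
    (∀ v' : EuclideanSpace ℝ (Fin n2),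
      ‖y - calA A (vecMulVec (ofE (u (t + 1))) (ofE (vh t)))‖ ≤
        ‖y - calA A (vecMulVec (ofE (u (t + 1))) (ofE v'))‖) ∧
    v (t + 1) = ‖vh t‖⁻¹ • vh t

-- ===== auxiliary lemmas =====
section Aux

lemma inner_eqE {ι : Type*} [Fintype ι] (x y : EuclideanSpace ℝ ι) :
    ⟪x, y⟫ = ∑ i, x i * y i := by
  simp [PiLp.inner_apply, RCLike.inner_apply, mul_comm]

/-- Matrices as Euclidean space. -/
def fE {n1 n2 : ℕ} (M : Matrix (Fin n1) (Fin n2) ℝ) : EuclideanSpace ℝ (Fin n1 × Fin n2) :=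
  (WithLp.equiv 2 (Fin n1 × Fin n2 → ℝ)).symm fun p => M p.1 p.2

variable {n1 n2 m : ℕ}

lemma fE_apply (M : Matrix (Fin n1) (Fin n2) ℝ) (p : Fin n1 × Fin n2) :
    fE M p = M p.1 p.2 := rfl
lemma fE_add (A B : Matrix (Fin n1) (Fin n2) ℝ) : fE (A + B) = fE A + fE B := rfl
lemma fE_sub (A B : Matrix (Fin n1) (Fin n2) ℝ) : fE (A - B) = fE A - fE B := rfl
lemma fE_smul (c : ℝ) (A : Matrix (Fin n1) (Fin n2) ℝ) : fE (c • A) = c • fE A := rfl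

lemma fE_sum {ι : Type*} (s : Finset ι) (M : ι → Matrix (Fin n1) (Fin n2) ℝ) :
    fE (∑ k ∈ s, M k) = ∑ k ∈ s, fE (M k) := by
  classical
  induction s using Finset.induction_on with
  | empty => rfl
  | insert _ _ h ih => rw [Finset.sum_insert h, Finset.sum_insert h, fE_add, ih]

lemma frobInner_eq (A B : Matrix (Fin n1) (Fin n2) ℝ) : frobInner A B = ⟪fE A, fE B⟫ := by
  rw [inner_eqE]
  simp [frobInner, fE_apply, Fintype.sum_prod_type]

lemma frobNorm_eq (A : Matrix (Fin n1) (Fin n2) ℝ) : frobNorm A = ‖fE A‖ := by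
  rw [frobNorm, frobInner_eq, real_inner_self_eq_norm_mul_norm,
    Real.sqrt_mul_self (norm_nonneg _)]

lemma frobInner_self_eq_sq (A : Matrix (Fin n1) (Fin n2) ℝ) : frobInner A A = frobNorm A ^ 2 := by
  rw [frobInner_eq, frobNorm_eq, real_inner_self_eq_norm_sq]

lemma calA_apply (A : Fin m → Matrix (Fin n1) (Fin n2) ℝ) (X : Matrix (Fin n1) (Fin n2) ℝ)
    (i : Fin m) : calA A X i = (Real.sqrt m)⁻¹ * frobInner (A i) X := rfl

lemma frobInner_add_right (A B C : Matrix (Fin n1) (Fin n2) ℝ) :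
    frobInner A (B + C) = frobInner A B + frobInner A C := by
  simp [frobInner_eq, fE_add, inner_add_right]

lemma frobInner_sub_right (A B C : Matrix (Fin n1) (Fin n2) ℝ) :
    frobInner A (B - C) = frobInner A B - frobInner A C := by
  simp [frobInner_eq, fE_sub, inner_sub_right]

lemma frobInner_smul_right (c : ℝ) (A B : Matrix (Fin n1) (Fin n2) ℝ) :
    frobInner A (c • B) = c * frobInner A B := by
  rw [frobInner_eq, fE_smul, real_inner_smul_right, frobInner_eq]

lemma calA_add (A : Fin m → Matrix (Fin n1) (Fin n2) ℝ) (X Y : Matrix (Fin n1) (Fin n2) ℝ) :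
    calA A (X + Y) = calA A X + calA A Y := by
  ext i
  show (Real.sqrt m)⁻¹ * frobInner (A i) (X + Y) = _
  rw [frobInner_add_right, PiLp.add_apply, calA_apply, calA_apply]; ring

lemma calA_sub (A : Fin m → Matrix (Fin n1) (Fin n2) ℝ) (X Y : Matrix (Fin n1) (Fin n2) ℝ) :
    calA A (X - Y) = calA A X - calA A Y := by
  ext i
  show (Real.sqrt m)⁻¹ * frobInner (A i) (X - Y) = _
  rw [frobInner_sub_right, PiLp.sub_apply, calA_apply, calA_apply]; ring

lemma calA_smul (A : Fin m → Matrix (Fin n1) (Fin n2) ℝ) (c : ℝ)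
    (X : Matrix (Fin n1) (Fin n2) ℝ) : calA A (c • X) = c • calA A X := by
  ext i
  show (Real.sqrt m)⁻¹ * frobInner (A i) (c • X) = _
  rw [frobInner_smul_right]
  rw [PiLp.smul_apply, calA_apply, smul_eq_mul]; ring

/-- adjoint identity -/
lemma frobInner_calAdj (A : Fin m → Matrix (Fin n1) (Fin n2) ℝ)
    (z : EuclideanSpace ℝ (Fin m)) (Y : Matrix (Fin n1) (Fin n2) ℝ) :
    frobInner (calAdj A z) Y = ⟪z, calA A Y⟫ := by
  rw [calAdj, frobInner_eq, fE_sum, sum_inner, inner_eqE]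
  congr 1
  funext k
  rw [fE_smul, real_inner_smul_left, ← frobInner_eq, calA_apply]
  show (Real.sqrt m)⁻¹ * z k * frobInner (A k) Y = _
  ring

end Aux

section Aux2
variable {n1 n2 m : ℕ}

lemma toE_apply {n : ℕ} (f : Fin n → ℝ) (i : Fin n) : toE f i = f i := rfl
lemma ofE_apply {n : ℕ} (x : EuclideanSpace ℝ (Fin n)) (i : Fin n) : ofE x i = x i := rfl
lemma e1_apply {n : ℕ} (i : Fin n) : e1 n i = if (i : ℕ) = 0 then 1 else 0 := rfl

lemma rank_add_le' (A B : Matrix (Fin n1) (Fin n2) ℝ) : (A + B).rank ≤ A.rank + B.rank := by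
  have h : LinearMap.range (A + B).mulVecLin ≤
      LinearMap.range A.mulVecLin ⊔ LinearMap.range B.mulVecLin := by
    rintro x ⟨y, rfl⟩
    exact Submodule.mem_sup.2 ⟨A *ᵥ y, ⟨y, rfl⟩, B *ᵥ y, ⟨y, rfl⟩,
      by simp [Matrix.mulVecLin_apply, Matrix.add_mulVec]⟩
  have h2 := Submodule.finrank_mono h
  have h3 := Submodule.finrank_sup_add_finrank_inf_eq
    (LinearMap.range A.mulVecLin) (LinearMap.range B.mulVecLin)
  unfold Matrix.rank
  omega

lemma vecMulVec_mulVec' (a : Fin n1 → ℝ) (b x : Fin n2 → ℝ) :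
    vecMulVec a b *ᵥ x = (b ⬝ᵥ x) • a := by
  funext i
  simp [Matrix.mulVec, dotProduct, vecMulVec_apply, Finset.mul_sum, Finset.sum_mul]
  ring_nf

lemma rank_vecMulVec_le (a : Fin n1 → ℝ) (b : Fin n2 → ℝ) : (vecMulVec a b).rank ≤ 1 := by
  have h : LinearMap.range (vecMulVec a b).mulVecLin ≤ Submodule.span ℝ {a} := by
    rintro x ⟨y, rfl⟩
    rw [Matrix.mulVecLin_apply, vecMulVec_mulVec']
    exact Submodule.smul_mem _ _ (Submodule.mem_span_singleton_self a)
  have h2 := Submodule.finrank_mono h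
  unfold Matrix.rank
  rcases eq_or_ne a 0 with rfl | ha
  · rw [Submodule.span_zero_singleton] at h2
    simp only [finrank_bot] at h2
    omega
  · rw [finrank_span_singleton ha] at h2
    exact h2

lemma vecMulVec_add_left (a a' : Fin n1 → ℝ) (b : Fin n2 → ℝ) :
    vecMulVec (a + a') b = vecMulVec a b + vecMulVec a' b := by
  funext i j; simp [vecMulVec_apply]; ring

lemma vecMulVec_smul_left (c : ℝ) (a : Fin n1 → ℝ) (b : Fin n2 → ℝ) :
    vecMulVec (c • a) b = c • vecMulVec a b := by
  funext i j; simp [vecMulVec_apply]; ring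

lemma vecMulVec_neg_left (a : Fin n1 → ℝ) (b : Fin n2 → ℝ) :
    vecMulVec (-a) b = - vecMulVec a b := by
  funext i j; simp [vecMulVec_apply]

lemma inner_toE_mulVec (M : Matrix (Fin n1) (Fin n2) ℝ) (x : EuclideanSpace ℝ (Fin n2))
    (y : EuclideanSpace ℝ (Fin n1)) :
    ⟪toE (M *ᵥ ofE x), y⟫ = frobInner M (vecMulVec (ofE y) (ofE x)) := by
  rw [inner_eqE]
  simp only [frobInner, toE_apply, ofE_apply, Matrix.mulVec, dotProduct,
    vecMulVec_apply, Finset.sum_mul]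
  refine Finset.sum_congr rfl fun i _ => Finset.sum_congr rfl fun j _ => by ring

lemma frobInner_vecMulVec (a c : EuclideanSpace ℝ (Fin n1)) (b d : EuclideanSpace ℝ (Fin n2)) :
    frobInner (vecMulVec (ofE a) (ofE b)) (vecMulVec (ofE c) (ofE d)) = ⟪a, c⟫ * ⟪b, d⟫ := by
  rw [inner_eqE, inner_eqE]
  simp only [frobInner, vecMulVec_apply, ofE_apply, Finset.sum_mul, Finset.mul_sum]
  rw [Finset.sum_comm]
  refine Finset.sum_congr rfl fun j _ => Finset.sum_congr rfl fun i _ => by ring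

lemma frobNorm_vecMulVec (a : EuclideanSpace ℝ (Fin n1)) (b : EuclideanSpace ℝ (Fin n2)) :
    frobNorm (vecMulVec (ofE a) (ofE b)) = ‖a‖ * ‖b‖ := by
  rw [frobNorm, frobInner_vecMulVec, real_inner_self_eq_norm_sq, real_inner_self_eq_norm_sq,
    ← mul_pow, Real.sqrt_sq (by positivity)]

lemma norm_e1_le (n : ℕ) : ‖e1 n‖ ≤ 1 := by
  have h : ⟪e1 n, e1 n⟫ ≤ 1 := by
    rw [inner_eqE]
    rcases Nat.eq_zero_or_pos n with rfl | hn
    · simp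
    · have : ∀ i : Fin n, e1 n i = if i = (⟨0, hn⟩ : Fin n) then 1 else 0 := by
        intro i; rw [e1_apply]; simp [Fin.ext_iff]
      simp [this]
  nlinarith [real_inner_self_eq_norm_sq (e1 n), norm_nonneg (e1 n)]

lemma norm_e1 (n : ℕ) (hn : 0 < n) : ‖e1 n‖ = 1 := by
  have h : ⟪e1 n, e1 n⟫ = 1 := by
    rw [inner_eqE]
    have : ∀ i : Fin n, e1 n i = if i = (⟨0, hn⟩ : Fin n) then 1 else 0 := by
      intro i; rw [e1_apply]; simp [Fin.ext_iff]
    simp [this]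
  nlinarith [real_inner_self_eq_norm_sq (e1 n), norm_nonneg (e1 n)]

end Aux2

section Aux3
variable {n1 n2 m : ℕ}

lemma rank_smul_le (c : ℝ) (X : Matrix (Fin n1) (Fin n2) ℝ) : (c • X).rank ≤ X.rank := by
  have h : LinearMap.range (c • X).mulVecLin ≤ LinearMap.range X.mulVecLin := by
    rintro x ⟨y, rfl⟩
    exact ⟨c • y, by simp [Matrix.mulVecLin_apply, Matrix.smul_mulVec,
      Matrix.mulVec_smul]⟩
  exact Submodule.finrank_mono h

lemma frobNorm_nonneg (X : Matrix (Fin n1) (Fin n2) ℝ) : 0 ≤ frobNorm X := by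
  rw [frobNorm_eq]; exact norm_nonneg _

lemma frobNorm_smul (c : ℝ) (X : Matrix (Fin n1) (Fin n2) ℝ) :
    frobNorm (c • X) = |c| * frobNorm X := by
  rw [frobNorm_eq, frobNorm_eq, fE_smul, norm_smul, Real.norm_eq_abs]

lemma frobNorm_zero_imp (X : Matrix (Fin n1) (Fin n2) ℝ) (h : frobNorm X = 0) : X = 0 := by
  rw [frobNorm_eq, norm_eq_zero] at h
  funext i j
  have := congrArg (fun x => x (i, j)) h
  simpa [fE_apply] using this

lemma calA_zero (A : Fin m → Matrix (Fin n1) (Fin n2) ℝ) : calA A 0 = 0 := by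
  have := calA_smul A 0 0
  simpa using this

lemma frobInner_zero_left (Y : Matrix (Fin n1) (Fin n2) ℝ) : frobInner 0 Y = 0 := by
  simp [frobInner]

lemma frobInner_zero_right (Y : Matrix (Fin n1) (Fin n2) ℝ) : frobInner Y 0 = 0 := by
  simp [frobInner]

lemma frobInner_comm' (A B : Matrix (Fin n1) (Fin n2) ℝ) : frobInner A B = frobInner B A := by
  simp [frobInner, mul_comm]

lemma frobInner_smul_left (c : ℝ) (A B : Matrix (Fin n1) (Fin n2) ℝ) :
    frobInner (c • A) B = c * frobInner A B := by
  rw [frobInner_comm', frobInner_smul_right, frobInner_comm']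

lemma rip_dev_weak (A : Fin m → Matrix (Fin n1) (Fin n2) ℝ) {δ : ℝ} (hRIP : HasRIP A δ)
    (X Y : Matrix (Fin n1) (Fin n2) ℝ) (h1 : (X + Y).rank ≤ 4) (h2 : (X - Y).rank ≤ 4) :
    |⟪calA A X, calA A Y⟫ - frobInner X Y| ≤ δ / 2 * (frobNorm X ^ 2 + frobNorm Y ^ 2) := by
  have hplus := hRIP (X + Y) h1
  have hminus := hRIP (X - Y) h2
  have ee1 : ⟪calA A X, calA A Y⟫ = (‖calA A (X+Y)‖^2 - ‖calA A (X-Y)‖^2) / 4 := by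
    rw [calA_add, calA_sub, norm_add_sq_real, norm_sub_sq_real]; ring
  have ee2 : frobInner X Y = (frobNorm (X+Y)^2 - frobNorm (X-Y)^2) / 4 := by
    simp only [frobInner_eq, frobNorm_eq, fE_add, fE_sub]
    rw [norm_add_sq_real, norm_sub_sq_real]; ring
  have ee3 : frobNorm X ^ 2 + frobNorm Y ^ 2
      = (frobNorm (X+Y)^2 + frobNorm (X-Y)^2) / 2 := by
    simp only [frobNorm_eq, fE_add, fE_sub]
    rw [norm_add_sq_real, norm_sub_sq_real]; ring
  rw [ee1, ee2, ee3, abs_le]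
  constructor <;> nlinarith [hplus.1, hplus.2, hminus.1, hminus.2]

lemma rip_dev (A : Fin m → Matrix (Fin n1) (Fin n2) ℝ) {δ : ℝ} (hδ : 0 ≤ δ)
    (hRIP : HasRIP A δ) (X Y : Matrix (Fin n1) (Fin n2) ℝ)
    (hX : X.rank ≤ 3) (hY : Y.rank ≤ 1) :
    |⟪calA A X, calA A Y⟫ - frobInner X Y| ≤ δ * frobNorm X * frobNorm Y := by
  have frobNorm_zero : frobNorm (0 : Matrix (Fin n1) (Fin n2) ℝ) = 0 := by
    simp [frobNorm, frobInner]
  rcases eq_or_ne (frobNorm X) 0 with hx | hx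
  · rw [frobNorm_zero_imp X hx]
    simp [calA_zero, frobInner_zero_left, frobNorm_zero]
  rcases eq_or_ne (frobNorm Y) 0 with hy | hy
  · rw [frobNorm_zero_imp Y hy]
    simp [calA_zero, frobInner_zero_right, frobNorm_zero]
  have hx' : 0 < frobNorm X := lt_of_le_of_ne (frobNorm_nonneg X) (Ne.symm hx)
  have hy' : 0 < frobNorm Y := lt_of_le_of_ne (frobNorm_nonneg Y) (Ne.symm hy)
  set a : ℝ := Real.sqrt (frobNorm Y / frobNorm X) with ha_def
  have ha : 0 < a := Real.sqrt_pos.2 (div_pos hy' hx')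
  have ha2 : a ^ 2 = frobNorm Y / frobNorm X := Real.sq_sqrt (le_of_lt (div_pos hy' hx'))
  have hr1 : (a • X + a⁻¹ • Y).rank ≤ 4 := by
    have := (rank_add_le' (a • X) (a⁻¹ • Y)).trans
      (add_le_add ((rank_smul_le a X).trans hX) ((rank_smul_le a⁻¹ Y).trans hY))
    omega
  have hr2 : (a • X - a⁻¹ • Y).rank ≤ 4 := by
    have h5 : (a • X - a⁻¹ • Y) = a • X + (-a⁻¹) • Y := by
      rw [sub_eq_add_neg, neg_smul]
    rw [h5]
    have := (rank_add_le' (a • X) ((-a⁻¹) • Y)).trans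
      (add_le_add ((rank_smul_le a X).trans hX) ((rank_smul_le (-a⁻¹) Y).trans hY))
    omega
  have key := rip_dev_weak A hRIP (a • X) (a⁻¹ • Y) hr1 hr2
  rw [calA_smul, calA_smul, real_inner_smul_left, real_inner_smul_right,
    frobInner_smul_left, frobInner_smul_right, frobNorm_smul, frobNorm_smul,
    abs_of_pos ha, abs_of_pos (inv_pos.2 ha)] at key
  have haa : a * (a⁻¹ * ⟪calA A X, calA A Y⟫) = ⟪calA A X, calA A Y⟫ := by
    field_simp
  have hbb : a * (a⁻¹ * frobInner X Y) = frobInner X Y := by field_simp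
  rw [haa, hbb] at key
  have hrhs : δ / 2 * ((a * frobNorm X) ^ 2 + (a⁻¹ * frobNorm Y) ^ 2)
      = δ * frobNorm X * frobNorm Y := by
    have hainv2 : (a⁻¹) ^ 2 = frobNorm X / frobNorm Y := by
      rw [inv_pow, ha2]
      rw [inv_div]
    rw [mul_pow, mul_pow, hainv2, ha2]
    field_simp
    ring
  rw [hrhs] at key
  exact key

end Aux3

section Aux4
variable {n1 n2 m : ℕ}

lemma frobInner_sub_left (A B C : Matrix (Fin n1) (Fin n2) ℝ) :
    frobInner (A - B) C = frobInner A C - frobInner B C := by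
  rw [frobInner_comm', frobInner_sub_right, frobInner_comm' C A, frobInner_comm' C B]

lemma frobNorm_add_le (A B : Matrix (Fin n1) (Fin n2) ℝ) :
    frobNorm (A + B) ≤ frobNorm A + frobNorm B := by
  rw [frobNorm_eq, frobNorm_eq, frobNorm_eq, fE_add]
  exact norm_add_le _ _

end Aux4

set_option maxHeartbeats 1000000 in
/-- Lemma `perpdecrease`: if `𝒜` satisfies the RIP with constant `δ ∈ (0,1)`,
`v` is a unit vector and `u` satisfies the normal equation, then
(a) `‖u − ⟨v_⋆,v⟩u_⋆‖ ≤ (δ/(1−δ))‖v^⊥‖`, (b) `‖u^⊥‖ ≤ (δ/(1−δ))‖v^⊥‖`, and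
(c) if moreover `δ ≤ 1/2`, then `‖u‖ ≤ 2`. -/
theorem statement10 {n1 n2 m : ℕ} (A : Fin m → Matrix (Fin n1) (Fin n2) ℝ) (δ : ℝ)
    (hδ0 : 0 < δ) (hδ1 : δ < 1) (hRIP : HasRIP A δ)
    (v : EuclideanSpace ℝ (Fin n2)) (hv : ‖v‖ = 1)
    (u : EuclideanSpace ℝ (Fin n1)) (hNE : NormalEq A u v) :
    ‖u - ⟪e1 n2, v⟫ • e1 n1‖ ≤ δ / (1 - δ) * ‖perp v‖ ∧
    ‖perp u‖ ≤ δ / (1 - δ) * ‖perp v‖ ∧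
    (δ ≤ 1 / 2 → ‖u‖ ≤ 2) := by
  have hδδ : (0:ℝ) < 1 - δ := by linarith
  have hrhs0 : 0 ≤ δ / (1 - δ) * ‖perp v‖ :=
    mul_nonneg (div_nonneg hδ0.le hδδ.le) (norm_nonneg _)
  -- n2 > 0
  rcases Nat.eq_zero_or_pos n2 with rfl | hn2
  · exfalso
    have h0 : v = 0 := Subsingleton.elim v 0
    rw [h0, norm_zero] at hv
    exact one_ne_zero hv.symm
  -- trivial case n1 = 0
  rcases Nat.eq_zero_or_pos n1 with rfl | hn1
  · have h0 : ∀ x : EuclideanSpace ℝ (Fin 0), x = 0 := fun x => Subsingleton.elim x 0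
    refine ⟨?_, ?_, fun _ => ?_⟩
    · rw [h0 (u - ⟪e1 n2, v⟫ • e1 0), norm_zero]; exact hrhs0
    · rw [h0 (perp u), norm_zero]; exact hrhs0
    · rw [h0 u, norm_zero]; norm_num
  -- main case
  unfold NormalEq at hNE
  rw [real_inner_comm (e1 n2) v] at hNE
  set c : ℝ := ⟪e1 n2, v⟫ with hc
  set Z : Matrix (Fin n1) (Fin n2) ℝ :=
    vecMulVec (ofE u) (ofE v) - vecMulVec (ofE (e1 n1)) (ofE (e1 n2)) with hZ
  set w : EuclideanSpace ℝ (Fin n1) := u - c • e1 n1 with hwdef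
  have he1 : ‖e1 n1‖ = 1 := norm_e1 n1 hn1
  have he2 : ‖e1 n2‖ = 1 := norm_e1 n2 hn2
  have hw : w = toE ((Z - calAdj A (calA A Z)) *ᵥ ofE v) := by
    rw [hwdef, hNE, add_sub_cancel_left]
  set Y : Matrix (Fin n1) (Fin n2) ℝ := vecMulVec (ofE w) (ofE v) with hY
  -- key identity
  have hx2 : ‖w‖ ^ 2 = frobInner Z Y - ⟪calA A Z, calA A Y⟫ := by
    have h0 : (‖w‖:ℝ) ^ 2 = ⟪w, w⟫ := (real_inner_self_eq_norm_sq w).symm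
    rw [h0]
    nth_rewrite 1 [hw]
    rw [inner_toE_mulVec, ← hY, frobInner_sub_left, frobInner_calAdj]
  -- rank bounds
  have hZr : Z.rank ≤ 3 := by
    rw [hZ, sub_eq_add_neg, ← vecMulVec_neg_left]
    have h1 := rank_add_le' (vecMulVec (ofE u) (ofE v))
      (vecMulVec (-(ofE (e1 n1))) (ofE (e1 n2)))
    have h2 := rank_vecMulVec_le (ofE u) (ofE v)
    have h3 := rank_vecMulVec_le (-(ofE (e1 n1))) (ofE (e1 n2))
    omega
  have hYr : Y.rank ≤ 1 := rank_vecMulVec_le _ _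
  have hdev := rip_dev A hδ0.le hRIP Z Y hZr hYr
  have hYn : frobNorm Y = ‖w‖ := by rw [hY, frobNorm_vecMulVec, hv, mul_one]
  -- perp v norm facts
  have hpv2 : ‖perp v‖ ^ 2 = 1 - c ^ 2 := by
    rw [perp, par, ← hc, norm_sub_sq_real, real_inner_smul_right, norm_smul, he2, hv,
      real_inner_comm (e1 n2) v, ← hc, Real.norm_eq_abs]
    simp only [mul_one, one_pow, sq_abs]
    ring
  have hcv : ‖c • v - e1 n2‖ = ‖perp v‖ := by
    have h1 : ‖c • v - e1 n2‖ ^ 2 = 1 - c ^ 2 := by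
      rw [norm_sub_sq_real, real_inner_smul_left, norm_smul, he2, hv,
        real_inner_comm (e1 n2) v, ← hc, Real.norm_eq_abs]
      simp only [mul_one, one_pow, sq_abs]
      ring
    have h2 := h1.trans hpv2.symm
    have := congrArg Real.sqrt h2
    rwa [Real.sqrt_sq (norm_nonneg _), Real.sqrt_sq (norm_nonneg _)] at this
  -- Z norm bound
  have hZsplit : Z = Y + vecMulVec (ofE (e1 n1)) (ofE (c • v - e1 n2)) := by
    funext i j
    rw [hZ, hY, hwdef]
    simp only [Matrix.sub_apply, Matrix.add_apply, vecMulVec_apply, ofE_apply,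
      PiLp.sub_apply, PiLp.smul_apply, smul_eq_mul]
    ring
  have hZn : frobNorm Z ≤ ‖w‖ + ‖perp v‖ := by
    rw [hZsplit]
    refine (frobNorm_add_le _ _).trans ?_
    rw [hYn, frobNorm_vecMulVec, he1, one_mul, hcv]
  -- the key inequality
  have kx : ‖w‖ ^ 2 ≤ δ * (‖w‖ + ‖perp v‖) * ‖w‖ := by
    rw [hx2]
    have h1 : frobInner Z Y - ⟪calA A Z, calA A Y⟫ ≤ δ * frobNorm Z * frobNorm Y := by
      have := abs_le.1 hdev
      linarith [this.1]
    refine h1.trans ?_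
    rw [hYn]
    have h2 : δ * frobNorm Z ≤ δ * (‖w‖ + ‖perp v‖) :=
      mul_le_mul_of_nonneg_left hZn hδ0.le
    exact mul_le_mul_of_nonneg_right h2 (norm_nonneg w)
  -- part (a)
  have ha : ‖w‖ ≤ δ / (1 - δ) * ‖perp v‖ := by
    rcases eq_or_lt_of_le (norm_nonneg w) with h0 | h0
    · rw [← h0]; exact hrhs0
    · rw [div_mul_eq_mul_div, le_div_iff₀ hδδ]
      nlinarith [kx, h0]
  refine ⟨ha, ?_, ?_⟩
  -- part (b)
  · have hperpu : perp u = w - ⟪e1 n1, w⟫ • e1 n1 := by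
      rw [perp, par, hwdef, inner_sub_right, real_inner_smul_right,
        real_inner_self_eq_norm_sq, he1]
      rw [one_pow, mul_one, sub_smul]
      abel
    have hb2 : ‖perp u‖ ^ 2 = ‖w‖ ^ 2 - ⟪e1 n1, w⟫ ^ 2 := by
      rw [hperpu, norm_sub_sq_real, real_inner_smul_right, norm_smul, he1,
        real_inner_comm (e1 n1) w, Real.norm_eq_abs]
      simp only [mul_one, one_pow, sq_abs]
      ring
    have hble : ‖perp u‖ ≤ ‖w‖ := by
      nlinarith [hb2, norm_nonneg (perp u), norm_nonneg w, sq_nonneg ⟪e1 n1, w⟫]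
    exact hble.trans ha
  -- part (c)
  · intro hδhalf
    have hcle : |c| ≤ 1 := by
      have h1 := abs_real_inner_le_norm (e1 n2) v
      rw [he2, hv, one_mul, ← hc] at h1
      exact h1
    have hple : ‖perp v‖ ≤ 1 := by nlinarith [hpv2, norm_nonneg (perp v), sq_nonneg c]
    have hfrac : δ / (1 - δ) ≤ 1 := by
      rw [div_le_one hδδ]; linarith
    have hwle : ‖w‖ ≤ 1 := by
      refine ha.trans ?_
      calc δ / (1 - δ) * ‖perp v‖ ≤ 1 * 1 :=
        mul_le_mul hfrac hple (norm_nonneg _) (by norm_num)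
      _ = 1 := by norm_num
    have hu : u = w + c • e1 n1 := by rw [hwdef]; abel
    calc ‖u‖ ≤ ‖w‖ + ‖c • e1 n1‖ := by rw [hu]; exact norm_add_le _ _
      _ ≤ 1 + 1 := by
          rw [norm_smul, Real.norm_eq_abs, he1, mul_one]
          exact add_le_add hwle hcle
      _ = 2 := by norm_num

end ALSPaper
end
end

section
/- Let v ∈ ℝ^{n2} with ‖v‖ = 1 and v^∥ ≠ 0, let u ∈ ℝ^{n1} be nonzero, and let 0 < β < α < 1 be real numbers such that ‖u^∥‖² ≥ α·‖v^∥‖² and ‖u^⊥‖² ≤ β·‖v^⊥‖². Set û := u/‖u‖. Then ‖û^∥‖² ≥ α·‖v^∥‖² / (β + (α−β)·‖v^∥‖²) ≥ ‖v^∥‖² / (β/α + ‖v^∥‖²), and ‖û^⊥‖² ≤ (β/(α·‖v^∥‖²))·‖v^⊥‖². -/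
open MeasureTheory ProbabilityTheory Matrix Finset
open scoped BigOperators ENNReal NNReal RealInnerProductSpace

noncomputable section

namespace ALSPaper

lemma par_smul {n : ℕ} (c : ℝ) (x : EuclideanSpace ℝ (Fin n)) :
    par (c • x) = c • par x := by
  simp [par, inner_smul_right, smul_smul]

lemma perp_smul {n : ℕ} (c : ℝ) (x : EuclideanSpace ℝ (Fin n)) :
    perp (c • x) = c • perp x := by
  simp [perp, par_smul, smul_sub]

lemma e1_succ (m : ℕ) : e1 (m+1) = EuclideanSpace.single (0 : Fin (m+1)) (1:ℝ) := by
  ext i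
  simp only [e1, toE, EuclideanSpace.single_apply, WithLp.equiv_symm_apply, Fin.ext_iff, Fin.val_zero]

lemma inner_x_par {n : ℕ} (x : EuclideanSpace ℝ (Fin n)) :
    ⟪x, par x⟫ = ‖par x‖ ^ 2 := by
  rcases n with _ | m
  · have he : e1 0 = 0 := by ext i; exact absurd i.2 (by omega)
    simp [par, he]
  · have he : ‖e1 (m+1)‖ = 1 := by
      rw [e1_succ]; simp [EuclideanSpace.norm_single]
    rw [par, inner_smul_right, norm_smul, real_inner_comm]
    rw [he, mul_pow]
    simp [sq_abs, sq]

lemma pythag {n : ℕ} (x : EuclideanSpace ℝ (Fin n)) :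
    ‖par x‖ ^ 2 + ‖perp x‖ ^ 2 = ‖x‖ ^ 2 := by
  have h := inner_x_par x
  have h2 : ‖x - par x‖ ^ 2 = ‖x‖ ^ 2 - 2 * ⟪x, par x⟫ + ‖par x‖ ^ 2 :=
    norm_sub_sq_real x (par x)
  rw [perp, h2, h]; ring

/-- Lemma `convergence`: error propagation through the normalization step. -/
theorem statement15 {n1 n2 : ℕ}
    (v : EuclideanSpace ℝ (Fin n2)) (hv : ‖v‖ = 1) (hvpar : par v ≠ 0)
    (u : EuclideanSpace ℝ (Fin n1)) (hu : u ≠ 0)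
    (α β : ℝ) (hβ0 : 0 < β) (hβα : β < α) (hα1 : α < 1)
    (hpar : ‖par u‖ ^ 2 ≥ α * ‖par v‖ ^ 2)
    (hperp : ‖perp u‖ ^ 2 ≤ β * ‖perp v‖ ^ 2) :
    (‖par (‖u‖⁻¹ • u)‖ ^ 2 ≥ α * ‖par v‖ ^ 2 / (β + (α - β) * ‖par v‖ ^ 2) ∧
      α * ‖par v‖ ^ 2 / (β + (α - β) * ‖par v‖ ^ 2) ≥ ‖par v‖ ^ 2 / (β / α + ‖par v‖ ^ 2)) ∧
    ‖perp (‖u‖⁻¹ • u)‖ ^ 2 ≤ β / (α * ‖par v‖ ^ 2) * ‖perp v‖ ^ 2 := by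
  have hNpos : (0:ℝ) < ‖u‖ := norm_pos_iff.mpr hu
  have hN2 : (0:ℝ) < ‖u‖ ^ 2 := by positivity
  have ha : (0:ℝ) < ‖par v‖ ^ 2 := pow_pos (norm_pos_iff.mpr hvpar) 2
  have hb0 : (0:ℝ) ≤ ‖perp v‖ ^ 2 := sq_nonneg _
  have hab : ‖par v‖ ^ 2 + ‖perp v‖ ^ 2 = 1 := by
    rw [pythag v, hv]; norm_num
  have hPu : ‖par u‖ ^ 2 + ‖perp u‖ ^ 2 = ‖u‖ ^ 2 := pythag u
  have hP0 : (0:ℝ) ≤ ‖par u‖ ^ 2 := sq_nonneg _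
  have hQ0 : (0:ℝ) ≤ ‖perp u‖ ^ 2 := sq_nonneg _
  have hα0 : (0:ℝ) < α := lt_trans hβ0 hβα
  have hpar2 : ‖par (‖u‖⁻¹ • u)‖ ^ 2 = ‖par u‖ ^ 2 / ‖u‖ ^ 2 := by
    rw [par_smul, norm_smul, mul_pow]
    simp [sq_abs]
    field_simp
  have hperp2 : ‖perp (‖u‖⁻¹ • u)‖ ^ 2 = ‖perp u‖ ^ 2 / ‖u‖ ^ 2 := by
    rw [perp_smul, norm_smul, mul_pow]
    simp [sq_abs]
    field_simp
  have hD : (0:ℝ) < β + (α - β) * ‖par v‖ ^ 2 := by nlinarith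
  have hD2 : (0:ℝ) < β / α + ‖par v‖ ^ 2 := by positivity
  set P := ‖par u‖ ^ 2
  set Q := ‖perp u‖ ^ 2
  set a := ‖par v‖ ^ 2
  set b := ‖perp v‖ ^ 2
  refine ⟨⟨?_, ?_⟩, ?_⟩
  · rw [hpar2, ge_iff_le, div_le_div_iff₀ hD hN2]
    have hb1 : b = 1 - a := by linarith
    have hperp' : Q ≤ β * (1 - a) := by rw [← hb1]; exact hperp
    have h1a : (0:ℝ) ≤ 1 - a := by nlinarith
    nlinarith [mul_le_mul_of_nonneg_left hperp' (mul_nonneg hα0.le ha.le),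
      mul_le_mul_of_nonneg_right hpar (mul_nonneg hβ0.le h1a)]
  · rw [ge_iff_le, div_le_div_iff₀ hD2 hD]
    have hcancel : α * (β / α) = β := mul_div_cancel₀ β (ne_of_gt hα0)
    nlinarith [mul_nonneg hβ0.le (mul_nonneg ha.le ha.le)]
  · rw [hperp2, div_le_iff₀ hN2]
    rw [div_mul_eq_mul_div, div_mul_eq_mul_div, le_div_iff₀ (by positivity : (0:ℝ) < α * a)]
    nlinarith [mul_le_mul hperp hpar (mul_nonneg hα0.le ha.le) (mul_nonneg hβ0.le hb0),
      mul_nonneg (mul_nonneg hβ0.le hb0) hQ0]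


end ALSPaper
end
end
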